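/- arXiv:1202.6565 — 2 statements merged into one kernel-verified Lean document; each statement's English description precedes it below -/
import Mathlib

section
/- Let f(z) = (z − i)/(z + i), so that f maps ℍ² \ {i} onto 𝔻 \ {0} with f(i) = 0. Then the constant 2 in the inequality j_{𝔻∖{0}}(f(x), f(y)) ≤ 2 · j_{ℍ²∖{i}}(x, y) (valid for all x, y ∈ ℍ² \ {i}) is best possible: with x = t + ai and y = ai, 0 < a < 1/3, the ratio j_{𝔻∖{0}}(f(x), f(y)) / j_{ℍ²∖{i}}(x, y) tends to 2 as t → ∞. -/
open Metric Filter Topology Set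

/-- The distance ratio metric of a domain `G`:
`j_G(x,y) = log(1 + |x-y| / min(d(x,∂G), d(y,∂G)))`. -/
noncomputable def jdist {E : Type*} [PseudoMetricSpace E] (G : Set E) (x y : E) : ℝ :=
  Real.log (1 + dist x y /
    min (Metric.infDist x (frontier G)) (Metric.infDist y (frontier G)))
private lemma my_le_infDist {x : ℂ} {b : ℝ} {s : Set ℂ} (hs : s.Nonempty)
    (H : ∀ y ∈ s, b ≤ dist x y) : b ≤ infDist x s := by
  refine le_of_not_gt fun h => ?_
  obtain ⟨y, hy, hlt⟩ := (infDist_lt_iff hs).1 h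
  exact absurd (H y hy) (not_le.2 hlt)

private lemma my_infDist_union {x : ℂ} {s t : Set ℂ} (hs : s.Nonempty) (ht : t.Nonempty) :
    infDist x (s ∪ t) = min (infDist x s) (infDist x t) := by
  refine le_antisymm (le_min (infDist_le_infDist_of_subset subset_union_left hs)
    (infDist_le_infDist_of_subset subset_union_right ht)) ?_
  refine my_le_infDist (hs.mono subset_union_left) fun y hy => ?_
  rcases hy with hy | hy
  · exact (min_le_left _ _).trans (infDist_le_dist_of_mem hy)
  · exact (min_le_right _ _).trans (infDist_le_dist_of_mem hy)

/-- distance to the real axis -/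
private lemma infDist_real_axis (x : ℂ) : infDist x {z : ℂ | z.im = 0} = |x.im| := by
  refine le_antisymm ?_ (my_le_infDist ⟨0, by simp⟩ fun y hy => ?_)
  · have h0 : ((x.re : ℂ)) ∈ {z : ℂ | z.im = 0} := by simp
    refine (infDist_le_dist_of_mem h0).trans_eq ?_
    rw [Complex.dist_eq]
    have : x - (x.re : ℂ) = x.im * Complex.I := by
      apply Complex.ext <;> simp
    rw [this]
    simp [Complex.norm_def, Complex.normSq_apply, Real.sqrt_mul_self_eq_abs]
  · have := Complex.abs_im_le_norm (x - y)
    rw [Complex.dist_eq]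
    simpa [Complex.sub_im, hy.symm ▸ (rfl : y.im = y.im), (show y.im = 0 from hy)] using this

private lemma isOpen_dom : IsOpen ({z : ℂ | 0 < z.im} \ {Complex.I}) :=
  (isOpen_lt continuous_const Complex.continuous_im).sdiff isClosed_singleton

private lemma frontier_dom :
    frontier ({z : ℂ | 0 < z.im} \ {Complex.I}) = {z : ℂ | z.im = 0} ∪ {Complex.I} := by
  rw [isOpen_dom.frontier_eq]
  apply Subset.antisymm
  · intro z hz
    obtain ⟨hz1, hz2⟩ := hz
    have him : 0 ≤ z.im := by
      have : closure ({z : ℂ | 0 < z.im} \ {Complex.I}) ⊆ {z : ℂ | 0 ≤ z.im} :=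
        closure_minimal (fun w hw => (le_of_lt hw.1 : (0:ℝ) ≤ w.im))
          (isClosed_le continuous_const Complex.continuous_im)
      exact this hz1
    by_cases hI : z = Complex.I
    · exact Or.inr hI
    · left
      by_contra him0
      exact hz2 ⟨lt_of_le_of_ne him (Ne.symm him0), hI⟩
  · rintro z (hz | hz)
    · have hz' : z.im = 0 := hz
      constructor
      · rw [Metric.mem_closure_iff]
        intro ε hε
        set t := min (ε / 2) (1 / 2) with ht
        have ht0 : 0 < t := lt_min (by linarith) (by norm_num)
        have ht1 : t < 1 := lt_of_le_of_lt (min_le_right _ _) (by norm_num)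
        refine ⟨z + t * Complex.I, ⟨?_, ?_⟩, ?_⟩
        · show 0 < (z + t * Complex.I).im
          simp [hz', ht0]
        · intro h
          have h1 : (z + t * Complex.I).im = 1 := by rw [Set.mem_singleton_iff.1 h]; simp
          simp [hz'] at h1
          rw [h1] at ht1; exact lt_irrefl _ ht1
        · have : dist z (z + ↑t * Complex.I) = t := by
            rw [Complex.dist_eq]
            have : z - (z + ↑t * Complex.I) = -(↑t * Complex.I) := by ring
            rw [this]
            simp [abs_of_pos ht0]
          rw [this]
          exact lt_of_le_of_lt (min_le_left _ _) (by linarith)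
      · intro h
        have h1 : 0 < z.im := h.1
        linarith
    · rw [Set.mem_singleton_iff] at hz
      subst hz
      constructor
      · rw [Metric.mem_closure_iff]
        intro ε hε
        set t := min (ε / 2) (1 / 2) with ht
        have ht0 : 0 < t := lt_min (by linarith) (by norm_num)
        refine ⟨Complex.I + t, ⟨?_, ?_⟩, ?_⟩
        · simp [Set.mem_setOf_eq]
        · intro h
          have : (Complex.I + (t:ℂ)).re = Complex.I.re := by rw [Set.mem_singleton_iff.1 h]
          simp at this
          rw [this] at ht0; exact lt_irrefl _ ht0
        · have : dist Complex.I (Complex.I + (t:ℂ)) = t := by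
            rw [Complex.dist_eq]
            have : Complex.I - (Complex.I + (t:ℂ)) = -(t:ℂ) := by ring
            rw [this]
            simp [abs_of_pos ht0]
          rw [this]
          exact lt_of_le_of_lt (min_le_left _ _) (by linarith)
      · intro h
        exact h.2 rfl

private lemma frontier_disk :
    frontier (Metric.ball (0 : ℂ) 1 \ {0}) = Metric.sphere (0 : ℂ) 1 ∪ {0} := by
  have hopen : IsOpen (Metric.ball (0 : ℂ) 1 \ {0}) := isOpen_ball.sdiff isClosed_singleton
  rw [hopen.frontier_eq]
  apply Subset.antisymm
  · intro z hz
    obtain ⟨hz1, hz2⟩ := hz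
    have hcb : z ∈ Metric.closedBall (0 : ℂ) 1 :=
      closure_minimal (Set.diff_subset.trans Metric.ball_subset_closedBall)
        Metric.isClosed_closedBall hz1
    by_cases h0 : z = 0
    · exact Or.inr h0
    · left
      have : z ∉ Metric.ball (0 : ℂ) 1 := fun hb => hz2 ⟨hb, h0⟩
      rw [Metric.mem_sphere]
      rw [Metric.mem_closedBall] at hcb
      rw [Metric.mem_ball] at this
      linarith [not_lt.1 this]
  · rintro z (hz | hz)
    · rw [Metric.mem_sphere] at hz
      constructor
      · rw [Metric.mem_closure_iff]
        intro ε hε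
        set t := min (ε / 2) (1 / 2) with ht
        have ht0 : 0 < t := lt_min (by linarith) (by norm_num)
        have ht1 : t < 1 := lt_of_le_of_lt (min_le_right _ _) (by norm_num)
        refine ⟨(1 - (t : ℂ)) * z, ⟨?_, ?_⟩, ?_⟩
        · rw [Metric.mem_ball, dist_zero_right, norm_mul]
          have hz1 : ‖z‖ = 1 := by rwa [dist_zero_right] at hz
          have : ‖(1 : ℂ) - (t : ℂ)‖ = 1 - t := by
            rw [show (1 : ℂ) - (t : ℂ) = ((1 - t : ℝ) : ℂ) by push_cast; ring]
            rw [Complex.norm_real, Real.norm_eq_abs, abs_of_pos (by linarith)]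
          rw [this, hz1]; linarith
        · intro h
          rw [Set.mem_singleton_iff, mul_eq_zero] at h
          rcases h with h | h
          · have : (1 : ℂ) - (t : ℂ) ≠ 0 := by
              intro hh
              have h2 : ((1 - t : ℝ) : ℂ) = 0 := by push_cast; exact hh
              have := Complex.ofReal_eq_zero.1 h2
              linarith
            exact this h
          · rw [h] at hz; simp at hz
        · have : z - (1 - (t : ℂ)) * z = (t : ℂ) * z := by ring
          rw [Complex.dist_eq, this]
          have hz1 : ‖z‖ = 1 := by rwa [dist_zero_right] at hz
          rw [norm_mul, Complex.norm_real, Real.norm_eq_abs,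
            abs_of_pos ht0, hz1, mul_one]
          exact lt_of_le_of_lt (min_le_left _ _) (by linarith)
      · intro h
        have h1 := h.1
        rw [Metric.mem_ball] at h1
        rw [hz] at h1; exact lt_irrefl _ h1
    · rw [Set.mem_singleton_iff] at hz
      subst hz
      constructor
      · rw [Metric.mem_closure_iff]
        intro ε hε
        set t := min (ε / 2) (1 / 2) with ht
        have ht0 : 0 < t := lt_min (by linarith) (by norm_num)
        have ht1 : t < 1 := lt_of_le_of_lt (min_le_right _ _) (by norm_num)
        refine ⟨(t : ℂ), ⟨?_, ?_⟩, ?_⟩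
        · rw [Metric.mem_ball, dist_zero_right, Complex.norm_real, Real.norm_eq_abs,
            abs_of_pos ht0]; exact ht1
        · simpa using ne_of_gt ht0
        · rw [dist_comm, dist_zero_right, Complex.norm_real, Real.norm_eq_abs, abs_of_pos ht0]
          exact lt_of_le_of_lt (min_le_left _ _) (by linarith)
      · intro h
        exact h.2 rfl

private lemma infDist_sphere (w : ℂ) (hw : ‖w‖ ≤ 1) :
    infDist w (Metric.sphere (0 : ℂ) 1) = 1 - ‖w‖ := by
  have hsne : (Metric.sphere (0 : ℂ) 1).Nonempty := ⟨1, by simp⟩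
  refine le_antisymm ?_ (my_le_infDist hsne fun y hy => ?_)
  · by_cases h0 : w = 0
    · subst h0
      have h1 : (1 : ℂ) ∈ Metric.sphere (0 : ℂ) 1 := by simp
      have := infDist_le_dist_of_mem (x := (0:ℂ)) h1
      simpa using this
    · have hw0 : 0 < ‖w‖ := norm_pos_iff.2 h0
      have hmem : ((‖w‖⁻¹ : ℝ) : ℂ) * w ∈ Metric.sphere (0 : ℂ) 1 := by
        rw [Metric.mem_sphere, dist_zero_right, norm_mul, Complex.norm_real, Real.norm_eq_abs,
          abs_of_pos (inv_pos.2 hw0), inv_mul_cancel₀ (ne_of_gt hw0)]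
      refine (infDist_le_dist_of_mem hmem).trans_eq ?_
      rw [dist_eq_norm]
      have : w - ((‖w‖⁻¹ : ℝ) : ℂ) * w = ((1 - ‖w‖⁻¹ : ℝ) : ℂ) * w := by push_cast; ring
      rw [this, norm_mul, Complex.norm_real, Real.norm_eq_abs]
      rw [show |1 - ‖w‖⁻¹| * ‖w‖ = |(1 - ‖w‖⁻¹) * ‖w‖| by
        rw [abs_mul, abs_of_pos hw0]]
      rw [sub_mul, inv_mul_cancel₀ (ne_of_gt hw0), one_mul]
      rw [abs_of_nonpos (by linarith), neg_sub]
  · rw [Metric.mem_sphere, dist_zero_right] at hy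
    rw [dist_eq_norm]
    calc 1 - ‖w‖ = ‖y‖ - ‖w‖ := by rw [hy]
    _ ≤ ‖y - w‖ := norm_sub_norm_le _ _
    _ = ‖w - y‖ := norm_sub_rev _ _

private lemma infDist_frontier_disk (w : ℂ) (hw : ‖w‖ ≤ 1) :
    infDist w (frontier (Metric.ball (0 : ℂ) 1 \ {0})) = min (1 - ‖w‖) ‖w‖ := by
  rw [frontier_disk, my_infDist_union (s := Metric.sphere (0:ℂ) 1) (t := {0}) ⟨1, by simp⟩ ⟨0, rfl⟩, infDist_sphere w hw,
    infDist_singleton, dist_zero_right]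

private lemma infDist_frontier_dom (x : ℂ) :
    infDist x (frontier ({z : ℂ | 0 < z.im} \ {Complex.I})) = min |x.im| (dist x Complex.I) := by
  rw [frontier_dom, my_infDist_union (s := {z : ℂ | z.im = 0}) (t := {Complex.I}) ⟨0, by simp⟩ ⟨Complex.I, rfl⟩, infDist_real_axis,
    infDist_singleton]
open Metric

private lemma add_I_ne {z : ℂ} (hz : 0 < z.im) : z + Complex.I ≠ 0 := by
  intro h
  have : (z + Complex.I).im = 0 := by rw [h]; simp
  simp [Complex.add_im] at this
  linarith

private lemma norm_add_I_lb {z : ℂ} (hz : 0 < z.im) : z.im + 1 ≤ ‖z + Complex.I‖ := by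
  have h := Complex.abs_im_le_norm (z + Complex.I)
  rw [Complex.add_im, Complex.I_im, abs_of_pos (by linarith)] at h
  exact h

private lemma norm_sq_identity (z : ℂ) :
    ‖z + Complex.I‖ ^ 2 = ‖z - Complex.I‖ ^ 2 + 4 * z.im := by
  rw [Complex.sq_norm, Complex.sq_norm,
    Complex.normSq_apply, Complex.normSq_apply]
  simp [Complex.add_re, Complex.add_im, Complex.sub_re, Complex.sub_im]
  ring

private lemma f_diff {x y : ℂ} (hx : x + Complex.I ≠ 0) (hy : y + Complex.I ≠ 0) :
    (x - Complex.I) / (x + Complex.I) - (y - Complex.I) / (y + Complex.I)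
      = 2 * Complex.I * (x - y) / ((x + Complex.I) * (y + Complex.I)) := by
  field_simp
  ring

private lemma f_diff_norm {x y : ℂ} (hx : x + Complex.I ≠ 0) (hy : y + Complex.I ≠ 0) :
    ‖(x - Complex.I) / (x + Complex.I) - (y - Complex.I) / (y + Complex.I)‖
      = 2 * ‖x - y‖ / (‖x + Complex.I‖ * ‖y + Complex.I‖) := by
  rw [f_diff hx hy, norm_div, norm_mul, norm_mul, Complex.norm_I]
  norm_num

private lemma case_u {qx sx sy d m : ℝ} (hqx : 0 < qx) (hsx : 0 < sx) (hsy : 1 ≤ sy)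
    (hm0 : 0 < m) (hmqx : m ≤ qx) (hd : 0 ≤ d) :
    2 * d / (sx * sy) / (qx / sx) ≤ 2 * (d / m) + (d / m) ^ 2 := by
  have hsy0 : 0 < sy := lt_of_lt_of_le one_pos hsy
  have he : 2 * d / (sx * sy) / (qx / sx) = 2 * d / (sy * qx) := by
    field_simp
  rw [he]
  have h1 : 2 * d / (sy * qx) ≤ 2 * d / m := by
    apply div_le_div_of_nonneg_left (by linarith) hm0
    nlinarith
  have h2 : (0:ℝ) ≤ (d / m) ^ 2 := sq_nonneg _
  have h3 : 2 * d / m = 2 * (d / m) := by ring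
  linarith [h1, h2, h3.symm.le]

private lemma case_e {px qx sx sy d m : ℝ} (hpx : 0 < px) (hqx : 0 < qx) (hsx : 0 < sx)
    (hsy : 1 ≤ sy) (hsqx : sx ^ 2 = qx ^ 2 + 4 * px) (hm0 : 0 < m) (hmpx : m ≤ px)
    (hmsy : m ≤ sy) (hd : 0 ≤ d) (htri : sx ≤ sy + d) :
    2 * d / (sx * sy) / (1 - qx / sx) ≤ 2 * (d / m) + (d / m) ^ 2 := by
  have hsy0 : 0 < sy := lt_of_lt_of_le one_pos hsy
  have hqlt : qx < sx := by nlinarith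
  have hsub : 0 < sx - qx := by linarith
  have h1 : 1 - qx / sx = (sx - qx) / sx := by field_simp
  have h2 : 2 * d / (sx * sy) / ((sx - qx) / sx) = 2 * d / (sy * (sx - qx)) := by
    field_simp
  rw [h1, h2]
  have h3 : 2 * (d / m) + (d / m) ^ 2 = (2 * d * m + d ^ 2) / m ^ 2 := by
    field_simp
  rw [h3, div_le_div_iff₀ (by positivity) (by positivity)]
  have hP : 0 < sx + qx := by linarith
  have hkey : (sx - qx) * (sx + qx) = 4 * px := by nlinarith
  have hmain : 2 * d * m ^ 2 * (sx + qx) ≤ ((2 * d * m + d ^ 2) * (sy * (sx - qx))) * (sx + qx) := by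
    have hrw : ((2 * d * m + d ^ 2) * (sy * (sx - qx))) * (sx + qx)
        = (2 * d * m + d ^ 2) * sy * (4 * px) := by
      linear_combination ((2 * d * m + d ^ 2) * sy) * hkey
    rw [hrw]
    have hsum : sx + qx ≤ 2 * (sy + d) := by linarith
    have H1 : 2 * d * m ^ 2 * (sx + qx) ≤ 2 * d * m ^ 2 * (2 * (sy + d)) :=
      mul_le_mul_of_nonneg_left hsum (by positivity)
    have H2 : 4 * d * sy * (m * m) ≤ 4 * d * sy * (px * m) :=
      mul_le_mul_of_nonneg_left (by nlinarith) (by positivity)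
    have H3 : 4 * d ^ 2 * (m * m) ≤ 4 * d ^ 2 * (px * sy) :=
      mul_le_mul_of_nonneg_left (by nlinarith) (by positivity)
    nlinarith [H1, H2, H3, mul_nonneg (mul_nonneg (mul_nonneg hd hm0.le) hsy0.le) hpx.le]
  exact le_of_mul_le_mul_right hmain hP

private lemma master {px qx sx py qy sy d : ℝ}
    (hpx : 0 < px) (hqx : 0 < qx) (hpy : 0 < py) (hqy : 0 < qy)
    (hsx : px + 1 ≤ sx) (hsy : py + 1 ≤ sy)
    (hsqx : sx ^ 2 = qx ^ 2 + 4 * px) (hsqy : sy ^ 2 = qy ^ 2 + 4 * py)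
    (hd : 0 ≤ d) (htrix : sx ≤ sy + d) (htriy : sy ≤ sx + d) :
    Real.log (1 + 2 * d / (sx * sy) /
        min (min (1 - qx / sx) (qx / sx)) (min (1 - qy / sy) (qy / sy)))
      ≤ 2 * Real.log (1 + d / min (min px qx) (min py qy)) := by
  have hsx0 : 0 < sx := by linarith
  have hsy0 : 0 < sy := by linarith
  have hsx1 : 1 ≤ sx := by linarith
  have hsy1 : 1 ≤ sy := by linarith
  have hqltx : qx < sx := by nlinarith
  have hqlty : qy < sy := by nlinarith
  set m := min (min px qx) (min py qy) with hm
  have hm0 : 0 < m := lt_min (lt_min hpx hqx) (lt_min hpy hqy)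
  have hmpx : m ≤ px := (min_le_left _ _).trans (min_le_left _ _)
  have hmqx : m ≤ qx := (min_le_left _ _).trans (min_le_right _ _)
  have hmpy : m ≤ py := (min_le_right _ _).trans (min_le_left _ _)
  have hmqy : m ≤ qy := (min_le_right _ _).trans (min_le_right _ _)
  have hmsx : m ≤ sx := hmpx.trans (by linarith)
  have hmsy : m ≤ sy := hmpy.trans (by linarith)
  set B := d / m with hB
  have hB0 : 0 ≤ B := div_nonneg hd hm0.le
  -- the image-side minimum is positive
  have hEx : 0 < 1 - qx / sx := by
    rw [sub_pos]; exact (div_lt_one hsx0).2 hqltx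
  have hEy : 0 < 1 - qy / sy := by
    rw [sub_pos]; exact (div_lt_one hsy0).2 hqlty
  have hUx : 0 < qx / sx := div_pos hqx hsx0
  have hUy : 0 < qy / sy := div_pos hqy hsy0
  have hM0 : 0 < min (min (1 - qx / sx) (qx / sx)) (min (1 - qy / sy) (qy / sy)) :=
    lt_min (lt_min hEx hUx) (lt_min hEy hUy)
  set A := 2 * d / (sx * sy) /
      min (min (1 - qx / sx) (qx / sx)) (min (1 - qy / sy) (qy / sy)) with hA
  have hA0 : 0 ≤ A := div_nonneg (div_nonneg (by linarith) (by positivity)) hM0.le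
  have hkey : A ≤ 2 * B + B ^ 2 := by
    rw [hA]
    rcases min_cases (min (1 - qx / sx) (qx / sx)) (min (1 - qy / sy) (qy / sy)) with
      ⟨h, -⟩ | ⟨h, -⟩ <;> rw [h]
    · rcases min_cases (1 - qx / sx) (qx / sx) with ⟨h2, -⟩ | ⟨h2, -⟩ <;> rw [h2]
      · exact case_e hpx hqx hsx0 hsy1 hsqx hm0 hmpx hmsy hd htrix
      · exact case_u hqx hsx0 hsy1 hm0 hmqx hd
    · rcases min_cases (1 - qy / sy) (qy / sy) with ⟨h2, -⟩ | ⟨h2, -⟩ <;> rw [h2]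
      · rw [mul_comm sx sy]
        exact case_e hpy hqy hsy0 hsx1 hsqy hm0 hmpy hmsx hd htriy
      · rw [mul_comm sx sy]
        exact case_u hqy hsy0 hsx1 hm0 hmqy hd
  have hsq : 1 + A ≤ (1 + B) ^ 2 := by nlinarith
  calc Real.log (1 + A) ≤ Real.log ((1 + B) ^ 2) :=
        Real.log_le_log (by linarith) hsq
  _ = 2 * Real.log (1 + B) := by
        rw [Real.log_pow]; norm_num

private lemma part1 (f : ℂ → ℂ) (hf : ∀ z, f z = (z - Complex.I) / (z + Complex.I)) :
    ∀ x ∈ {z : ℂ | 0 < z.im} \ {Complex.I}, ∀ y ∈ {z : ℂ | 0 < z.im} \ {Complex.I},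
      jdist (Metric.ball (0 : ℂ) 1 \ {0}) (f x) (f y) ≤
        2 * jdist ({z : ℂ | 0 < z.im} \ {Complex.I}) x y := by
  rintro x ⟨hx1, hx2⟩ y ⟨hy1, hy2⟩
  have hpx : 0 < x.im := hx1
  have hpy : 0 < y.im := hy1
  have hxI : x ≠ Complex.I := hx2
  have hyI : y ≠ Complex.I := hy2
  have hxne : x + Complex.I ≠ 0 := add_I_ne hpx
  have hyne : y + Complex.I ≠ 0 := add_I_ne hpy
  have hqx : 0 < ‖x - Complex.I‖ := norm_pos_iff.2 (sub_ne_zero.2 hxI)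
  have hqy : 0 < ‖y - Complex.I‖ := norm_pos_iff.2 (sub_ne_zero.2 hyI)
  have hsx : x.im + 1 ≤ ‖x + Complex.I‖ := norm_add_I_lb hpx
  have hsy : y.im + 1 ≤ ‖y + Complex.I‖ := norm_add_I_lb hpy
  have hsx0 : 0 < ‖x + Complex.I‖ := by linarith
  have hsy0 : 0 < ‖y + Complex.I‖ := by linarith
  have hsqx : ‖x + Complex.I‖ ^ 2 = ‖x - Complex.I‖ ^ 2 + 4 * x.im := norm_sq_identity x
  have hsqy : ‖y + Complex.I‖ ^ 2 = ‖y - Complex.I‖ ^ 2 + 4 * y.im := norm_sq_identity y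
  have hqltx : ‖x - Complex.I‖ < ‖x + Complex.I‖ := by nlinarith
  have hqlty : ‖y - Complex.I‖ < ‖y + Complex.I‖ := by nlinarith
  have hfx : ‖f x‖ = ‖x - Complex.I‖ / ‖x + Complex.I‖ := by rw [hf x, norm_div]
  have hfy : ‖f y‖ = ‖y - Complex.I‖ / ‖y + Complex.I‖ := by rw [hf y, norm_div]
  have hfx1 : ‖f x‖ ≤ 1 := by rw [hfx]; exact le_of_lt ((div_lt_one hsx0).2 hqltx)
  have hfy1 : ‖f y‖ ≤ 1 := by rw [hfy]; exact le_of_lt ((div_lt_one hsy0).2 hqlty)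
  have hD : dist (f x) (f y) = 2 * ‖x - y‖ / (‖x + Complex.I‖ * ‖y + Complex.I‖) := by
    rw [dist_eq_norm, hf x, hf y, f_diff_norm hxne hyne]
  have htrix : ‖x + Complex.I‖ ≤ ‖y + Complex.I‖ + ‖x - y‖ := by
    calc ‖x + Complex.I‖ = ‖(y + Complex.I) + (x - y)‖ := by ring_nf
    _ ≤ ‖y + Complex.I‖ + ‖x - y‖ := norm_add_le _ _
  have htriy : ‖y + Complex.I‖ ≤ ‖x + Complex.I‖ + ‖x - y‖ := by
    calc ‖y + Complex.I‖ = ‖(x + Complex.I) + (y - x)‖ := by ring_nf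
    _ ≤ ‖x + Complex.I‖ + ‖y - x‖ := norm_add_le _ _
    _ = ‖x + Complex.I‖ + ‖x - y‖ := by rw [norm_sub_rev]
  simp only [jdist]
  rw [infDist_frontier_disk (f x) hfx1, infDist_frontier_disk (f y) hfy1,
    infDist_frontier_dom x, infDist_frontier_dom y, hD, hfx, hfy,
    dist_eq_norm x Complex.I, dist_eq_norm y Complex.I, dist_eq_norm x y,
    abs_of_pos hpx, abs_of_pos hpy]
  exact master hpx hqx hpy hqy hsx hsy hsqx hsqy (norm_nonneg _) htrix htriy

private noncomputable def XX (a t : ℝ) : ℂ := (t : ℂ) + (a : ℂ) * Complex.I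
private noncomputable def YY (a : ℝ) : ℂ := (a : ℂ) * Complex.I
private noncomputable def FF (a t : ℝ) : ℂ := (XX a t - Complex.I) / (XX a t + Complex.I)
private noncomputable def GG (a : ℝ) : ℂ := (YY a - Complex.I) / (YY a + Complex.I)
private noncomputable def SS (a t : ℝ) : ℝ := ‖XX a t + Complex.I‖
private noncomputable def QQ (a t : ℝ) : ℝ := ‖XX a t - Complex.I‖

private lemma XX_im (a t : ℝ) : (XX a t).im = a := by simp [XX]
private lemma XX_re (a t : ℝ) : (XX a t).re = t := by simp [XX]

private lemma S_lb (a t : ℝ) : t ≤ SS a t := by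
  have h := Complex.abs_re_le_norm (XX a t + Complex.I)
  have hre : (XX a t + Complex.I).re = t := by simp [XX]
  rw [hre] at h
  exact (le_abs_self t).trans (by rw [SS]; exact h)

private lemma Q_lb (a t : ℝ) : t ≤ QQ a t := by
  have h := Complex.abs_re_le_norm (XX a t - Complex.I)
  have hre : (XX a t - Complex.I).re = t := by simp [XX]
  rw [hre] at h
  exact (le_abs_self t).trans (by rw [QQ]; exact h)

private lemma S_ub {a t : ℝ} (ha : 0 < a) (ht : 0 ≤ t) : SS a t ≤ t + (1 + a) := by
  have h1 : XX a t + Complex.I = (t : ℂ) + ((a + 1 : ℝ) : ℂ) * Complex.I := by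
    rw [XX]; push_cast; ring
  rw [SS, h1]
  calc ‖(t : ℂ) + ((a + 1 : ℝ) : ℂ) * Complex.I‖
      ≤ ‖(t : ℂ)‖ + ‖((a + 1 : ℝ) : ℂ) * Complex.I‖ := norm_add_le _ _
  _ = |t| + |a + 1| := by
      rw [norm_mul, Complex.norm_I, Complex.norm_real, Complex.norm_real]
      simp [Real.norm_eq_abs]
  _ = t + (1 + a) := by rw [abs_of_nonneg ht, abs_of_pos (by linarith)]; ring

private lemma Q_ub {a t : ℝ} (ha : 0 < a) (ha1 : a < 1) (ht : 0 ≤ t) :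
    QQ a t ≤ t + (1 - a) := by
  have h1 : XX a t - Complex.I = (t : ℂ) + ((a - 1 : ℝ) : ℂ) * Complex.I := by
    rw [XX]; push_cast; ring
  rw [QQ, h1]
  calc ‖(t : ℂ) + ((a - 1 : ℝ) : ℂ) * Complex.I‖
      ≤ ‖(t : ℂ)‖ + ‖((a - 1 : ℝ) : ℂ) * Complex.I‖ := norm_add_le _ _
  _ = |t| + |a - 1| := by
      rw [norm_mul, Complex.norm_I, Complex.norm_real, Complex.norm_real]
      simp [Real.norm_eq_abs]
  _ = t + (1 - a) := by rw [abs_of_nonneg ht, abs_of_neg (by linarith)]; ring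

private lemma SQid (a t : ℝ) : SS a t ^ 2 = QQ a t ^ 2 + 4 * a := by
  have := norm_sq_identity (XX a t)
  rwa [XX_im] at this

private lemma XXne {a : ℝ} (ha : 0 < a) (t : ℝ) : XX a t + Complex.I ≠ 0 :=
  add_I_ne (by rw [XX_im]; exact ha)

private lemma XXI {a t : ℝ} (ht : 1 ≤ t) : XX a t ≠ Complex.I := by
  intro h
  have : (XX a t).re = Complex.I.re := by rw [h]
  rw [XX_re] at this
  simp at this
  linarith

private lemma Qpos {a t : ℝ} (ht : 1 ≤ t) : 0 < QQ a t :=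
  norm_pos_iff.2 (sub_ne_zero.2 (XXI ht))

private lemma Spos {a t : ℝ} (ht : 1 ≤ t) : 0 < SS a t :=
  lt_of_lt_of_le (by linarith) (S_lb a t)

private lemma QltS {a t : ℝ} (ha : 0 < a) (ht : 1 ≤ t) : QQ a t < SS a t := by
  nlinarith [SQid a t, Qpos (a := a) ht, Spos (a := a) ht]

private lemma FF_norm (a t : ℝ) : ‖FF a t‖ = QQ a t / SS a t := by
  rw [FF, norm_div]; rfl

private lemma FF_norm_lt {a t : ℝ} (ha : 0 < a) (ht : 1 ≤ t) : ‖FF a t‖ < 1 := by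
  rw [FF_norm]
  exact (div_lt_one (Spos ht)).2 (QltS ha ht)

private lemma Eform {a t : ℝ} (ha : 0 < a) (ht : 1 ≤ t) :
    1 - ‖FF a t‖ = 4 * a / (SS a t * (SS a t + QQ a t)) := by
  have hs0 : 0 < SS a t := Spos ht
  have hq0 : 0 < QQ a t := Qpos ht
  have hsum : (0:ℝ) < SS a t + QQ a t := by linarith
  have hk : (SS a t - QQ a t) * (SS a t + QQ a t) = 4 * a := by
    linear_combination SQid a t
  rw [FF_norm]
  rw [show (1:ℝ) - QQ a t / SS a t = (SS a t - QQ a t) / SS a t by field_simp]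
  rw [div_eq_div_iff (ne_of_gt hs0) (ne_of_gt (mul_pos hs0 hsum))]
  linear_combination SS a t * hk

private lemma L_F {a : ℝ} (ha : 0 < a) : Tendsto (fun t => FF a t) atTop (𝓝 1) := by
  rw [tendsto_iff_norm_sub_tendsto_zero]
  apply squeeze_zero' (g := fun t : ℝ => 2 / t)
    (Eventually.of_forall fun t => norm_nonneg _)
  · filter_upwards [eventually_ge_atTop (1:ℝ)] with t ht
    have hne := XXne ha t
    have hdiff : FF a t - 1 = -2 * Complex.I / (XX a t + Complex.I) := by
      rw [FF]; field_simp; ring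
    rw [hdiff, norm_div, norm_mul, Complex.norm_I]
    have h2 : ‖(-2 : ℂ)‖ = 2 := by norm_num
    rw [h2, mul_one]
    have hSt : t ≤ SS a t := S_lb a t
    have ht0 : (0:ℝ) < t := by linarith
    apply div_le_div_of_nonneg_left (by norm_num) ht0
    exact hSt
  · exact tendsto_const_nhds.div_atTop tendsto_id

private lemma L_U {a : ℝ} (ha : 0 < a) : Tendsto (fun t => ‖FF a t‖) atTop (𝓝 1) := by
  have := (L_F ha).norm
  simpa using this

private lemma L_E {a : ℝ} (ha : 0 < a) : Tendsto (fun t => 1 - ‖FF a t‖) atTop (𝓝 0) := by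
  have := tendsto_const_nhds.sub (L_U ha) (f := fun _ : ℝ => (1:ℝ))
  simpa using this

private lemma GG_val {a : ℝ} (ha : 0 < a) : GG a = (((a - 1) / (a + 1) : ℝ) : ℂ) := by
  have hI : Complex.I ≠ 0 := Complex.I_ne_zero
  have h1 : YY a - Complex.I = ((a - 1 : ℝ) : ℂ) * Complex.I := by rw [YY]; push_cast; ring
  have h2 : YY a + Complex.I = ((a + 1 : ℝ) : ℂ) * Complex.I := by rw [YY]; push_cast; ring
  rw [GG, h1, h2, mul_div_mul_right _ _ hI]
  push_cast
  ring

private lemma GG_norm {a : ℝ} (ha : 0 < a) (ha1 : a < 1) : ‖GG a‖ = (1 - a) / (1 + a) := by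
  rw [GG_val ha, Complex.norm_real, Real.norm_eq_abs, abs_div,
    abs_of_neg (by linarith : a - 1 < 0), abs_of_pos (by linarith : (0:ℝ) < a + 1)]
  rw [neg_sub]
  ring_nf

private lemma L_D {a : ℝ} (ha : 0 < a) :
    Tendsto (fun t => ‖FF a t - GG a‖) atTop (𝓝 (2 / (1 + a))) := by
  have h := ((L_F ha).sub (tendsto_const_nhds (x := GG a))).norm
  have hval : ‖(1 : ℂ) - GG a‖ = 2 / (1 + a) := by
    rw [GG_val ha]
    have hre : (1:ℝ) - (a - 1) / (a + 1) = 2 / (1 + a) := by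
      have hne : (a + 1 : ℝ) ≠ 0 := by linarith
      field_simp
      ring
    have hcast : (1 : ℂ) - (((a - 1) / (a + 1) : ℝ) : ℂ)
        = (((1 - (a - 1) / (a + 1) : ℝ)) : ℂ) := by push_cast; ring
    rw [hcast, hre, Complex.norm_real, Real.norm_eq_abs, abs_of_pos (by positivity)]
  rw [hval] at h
  exact h

private lemma L_ts {a : ℝ} (ha : 0 < a) :
    Tendsto (fun t => t / SS a t) atTop (𝓝 1) := by
  have hS_div : Tendsto (fun t => SS a t / t) atTop (𝓝 1) := by
    apply tendsto_of_tendsto_of_tendsto_of_le_of_le' (g := fun _ : ℝ => (1:ℝ))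
      (h := fun t : ℝ => 1 + (1 + a) / t) tendsto_const_nhds
    · have : Tendsto (fun t : ℝ => (1 + a) / t) atTop (𝓝 0) :=
        tendsto_const_nhds.div_atTop tendsto_id
      have h2 := tendsto_const_nhds.add this (f := fun _ : ℝ => (1:ℝ))
      simpa using h2
    · filter_upwards [eventually_ge_atTop (1:ℝ)] with t ht
      rw [le_div_iff₀ (by linarith : (0:ℝ) < t), one_mul]
      exact S_lb a t
    · filter_upwards [eventually_ge_atTop (1:ℝ)] with t ht
      have ht0 : (0:ℝ) < t := by linarith
      rw [div_le_iff₀ ht0, add_mul, one_mul, div_mul_cancel₀ _ (ne_of_gt ht0)]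
      linarith [S_ub ha (by linarith : (0:ℝ) ≤ t)]
  have h := hS_div.inv₀ one_ne_zero
  rw [inv_one] at h
  apply h.congr
  intro t
  rw [inv_div]

private lemma L_tsq {a : ℝ} (ha : 0 < a) (ha1 : a < 1) :
    Tendsto (fun t => t / (SS a t + QQ a t)) atTop (𝓝 (1/2)) := by
  have hQ_div : Tendsto (fun t => QQ a t / t) atTop (𝓝 1) := by
    apply tendsto_of_tendsto_of_tendsto_of_le_of_le' (g := fun _ : ℝ => (1:ℝ))
      (h := fun t : ℝ => 1 + (1 - a) / t) tendsto_const_nhds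
    · have : Tendsto (fun t : ℝ => (1 - a) / t) atTop (𝓝 0) :=
        tendsto_const_nhds.div_atTop tendsto_id
      have h2 := tendsto_const_nhds.add this (f := fun _ : ℝ => (1:ℝ))
      simpa using h2
    · filter_upwards [eventually_ge_atTop (1:ℝ)] with t ht
      rw [le_div_iff₀ (by linarith : (0:ℝ) < t), one_mul]
      exact Q_lb a t
    · filter_upwards [eventually_ge_atTop (1:ℝ)] with t ht
      have ht0 : (0:ℝ) < t := by linarith
      rw [div_le_iff₀ ht0, add_mul, one_mul, div_mul_cancel₀ _ (ne_of_gt ht0)]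
      linarith [Q_ub ha ha1 (by linarith : (0:ℝ) ≤ t)]
  have hS_div : Tendsto (fun t => SS a t / t) atTop (𝓝 1) := by
    apply tendsto_of_tendsto_of_tendsto_of_le_of_le' (g := fun _ : ℝ => (1:ℝ))
      (h := fun t : ℝ => 1 + (1 + a) / t) tendsto_const_nhds
    · have : Tendsto (fun t : ℝ => (1 + a) / t) atTop (𝓝 0) :=
        tendsto_const_nhds.div_atTop tendsto_id
      have h2 := tendsto_const_nhds.add this (f := fun _ : ℝ => (1:ℝ))
      simpa using h2
    · filter_upwards [eventually_ge_atTop (1:ℝ)] with t ht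
      rw [le_div_iff₀ (by linarith : (0:ℝ) < t), one_mul]
      exact S_lb a t
    · filter_upwards [eventually_ge_atTop (1:ℝ)] with t ht
      have ht0 : (0:ℝ) < t := by linarith
      rw [div_le_iff₀ ht0, add_mul, one_mul, div_mul_cancel₀ _ (ne_of_gt ht0)]
      linarith [S_ub ha (by linarith : (0:ℝ) ≤ t)]
  have hsum : Tendsto (fun t => (SS a t + QQ a t) / t) atTop (𝓝 2) := by
    have h := hS_div.add hQ_div
    norm_num at h
    apply h.congr
    intro t
    rw [add_div]
  have h := hsum.inv₀ (by norm_num : (2:ℝ) ≠ 0)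
  have h2 : ((2:ℝ))⁻¹ = 1/2 := by norm_num
  rw [h2] at h
  apply h.congr
  intro t
  rw [inv_div]

private lemma L_T2E {a : ℝ} (ha : 0 < a) (ha1 : a < 1) :
    Tendsto (fun t => t ^ 2 * (1 - ‖FF a t‖)) atTop (𝓝 (2 * a)) := by
  have hlim : Tendsto (fun t => 4 * a * ((t / SS a t) * (t / (SS a t + QQ a t))))
      atTop (𝓝 (4 * a * (1 * (1/2)))) :=
    tendsto_const_nhds.mul ((L_ts ha).mul (L_tsq ha ha1))
  have heq : (4 : ℝ) * a * (1 * (1/2)) = 2 * a := by ring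
  rw [heq] at hlim
  apply hlim.congr'
  filter_upwards [eventually_ge_atTop (1:ℝ)] with t ht
  rw [Eform ha ht]
  have hs0 : 0 < SS a t := Spos ht
  have hq0 : 0 < QQ a t := Qpos ht
  field_simp

private lemma J_im {a : ℝ} (ha : 0 < a) (ha3 : a < 1 / 3) :
    ∀ᶠ t in atTop, jdist (Metric.ball (0 : ℂ) 1 \ {0}) (FF a t) (GG a)
      = Real.log (1 + ‖FF a t - GG a‖ / (1 - ‖FF a t‖)) := by
  have haa : a < 1 := by linarith
  have h2a : (0:ℝ) < 2 * a / (1 + a) := by positivity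
  filter_upwards [eventually_ge_atTop (1:ℝ),
    (L_U ha).eventually (eventually_ge_nhds (by norm_num : (1/2:ℝ) < 1)),
    (L_E ha).eventually (eventually_lt_nhds h2a)] with t ht hU2 hE2
  have hFlt : ‖FF a t‖ < 1 := FF_norm_lt ha ht
  have hGle : ‖GG a‖ ≤ 1 := by
    rw [GG_norm ha haa]
    rw [div_le_one (by linarith)]
    linarith
  simp only [jdist]
  rw [infDist_frontier_disk (FF a t) (le_of_lt hFlt), infDist_frontier_disk (GG a) hGle,
    dist_eq_norm]
  have hGval : 1 - ‖GG a‖ = 2 * a / (1 + a) := by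
    rw [GG_norm ha haa]
    field_simp
    ring
  have hinner1 : min (1 - ‖FF a t‖) ‖FF a t‖ = 1 - ‖FF a t‖ :=
    min_eq_left (by linarith)
  have hinner2 : min (1 - ‖GG a‖) ‖GG a‖ = 2 * a / (1 + a) := by
    rw [hGval, GG_norm ha haa]
    apply min_eq_left
    rw [div_le_div_iff₀ (by linarith) (by linarith)]
    nlinarith
  rw [hinner1, hinner2]
  rw [min_eq_left (le_of_lt hE2)]

private lemma YY_im (a : ℝ) : (YY a).im = a := by simp [YY]

private lemma J_dom {a : ℝ} (ha : 0 < a) (ha3 : a < 1 / 3) :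
    ∀ᶠ t in atTop, jdist ({z : ℂ | 0 < z.im} \ {Complex.I}) (XX a t) (YY a)
      = Real.log (1 + t / a) := by
  have haa : a < 1 := by linarith
  filter_upwards [eventually_ge_atTop (1:ℝ)] with t ht
  simp only [jdist]
  rw [infDist_frontier_dom (XX a t), infDist_frontier_dom (YY a)]
  have h1 : min |(XX a t).im| (dist (XX a t) Complex.I) = a := by
    rw [XX_im, abs_of_pos ha]
    apply min_eq_left
    rw [dist_eq_norm]
    have : t ≤ ‖XX a t - Complex.I‖ := Q_lb a t
    linarith
  have hYI : YY a - Complex.I = ((a - 1 : ℝ) : ℂ) * Complex.I := by rw [YY]; push_cast; ring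
  have h2 : min |(YY a).im| (dist (YY a) Complex.I) = a := by
    rw [YY_im, abs_of_pos ha]
    apply min_eq_left
    rw [dist_eq_norm, hYI, norm_mul, Complex.norm_I, mul_one, Complex.norm_real,
      Real.norm_eq_abs, abs_of_neg (by linarith : a - 1 < 0)]
    linarith
  have h3 : dist (XX a t) (YY a) = t := by
    have : XX a t - YY a = (t : ℂ) := by rw [XX, YY]; ring
    rw [dist_eq_norm, this, Complex.norm_real, Real.norm_eq_abs, abs_of_nonneg (by linarith)]
  rw [h1, h2, h3, min_self]

private lemma part2 {a : ℝ} (ha : 0 < a) (ha3 : a < 1 / 3) :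
    Tendsto (fun t : ℝ => jdist (Metric.ball (0 : ℂ) 1 \ {0}) (FF a t) (GG a) /
        jdist ({z : ℂ | 0 < z.im} \ {Complex.I}) (XX a t) (YY a))
      atTop (𝓝 2) := by
  have haa : a < 1 := by linarith
  have ha1 : (0:ℝ) < 1 + a := by linarith
  -- the two auxiliary convergent functions
  have hnum : Tendsto (fun t => (1 - ‖FF a t‖) + ‖FF a t - GG a‖) atTop (𝓝 (2 / (1 + a))) := by
    have := (L_E ha).add (L_D ha)
    simpa using this
  have hgarg : Tendsto (fun t => ((1 - ‖FF a t‖) + ‖FF a t - GG a‖) / (t ^ 2 * (1 - ‖FF a t‖)))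
      atTop (𝓝 ((2 / (1 + a)) / (2 * a))) :=
    hnum.div (L_T2E ha haa) (by positivity)
  have hg : Tendsto (fun t => Real.log (((1 - ‖FF a t‖) + ‖FF a t - GG a‖) /
      (t ^ 2 * (1 - ‖FF a t‖)))) atTop (𝓝 (Real.log ((2 / (1 + a)) / (2 * a)))) :=
    hgarg.log (by positivity)
  have hharg : Tendsto (fun t : ℝ => 1 / t + 1 / a) atTop (𝓝 (1 / a)) := by
    have h1 : Tendsto (fun t : ℝ => 1 / t) atTop (𝓝 0) :=
      tendsto_const_nhds.div_atTop tendsto_id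
    have := h1.add (tendsto_const_nhds (x := 1 / a))
    simpa using this
  have hh : Tendsto (fun t : ℝ => Real.log (1 / t + 1 / a)) atTop (𝓝 (Real.log (1 / a))) :=
    hharg.log (by positivity)
  -- the model function
  have hGlim : Tendsto (fun t : ℝ =>
      (2 + Real.log (((1 - ‖FF a t‖) + ‖FF a t - GG a‖) / (t ^ 2 * (1 - ‖FF a t‖))) / Real.log t) /
      (1 + Real.log (1 / t + 1 / a) / Real.log t)) atTop (𝓝 2) := by
    have hnum2 : Tendsto (fun t : ℝ =>
        2 + Real.log (((1 - ‖FF a t‖) + ‖FF a t - GG a‖) / (t ^ 2 * (1 - ‖FF a t‖))) / Real.log t)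
        atTop (𝓝 2) := by
      have := tendsto_const_nhds.add (hg.div_atTop Real.tendsto_log_atTop) (f := fun _ : ℝ => (2:ℝ))
      simpa using this
    have hden2 : Tendsto (fun t : ℝ => 1 + Real.log (1 / t + 1 / a) / Real.log t)
        atTop (𝓝 1) := by
      have := tendsto_const_nhds.add (hh.div_atTop Real.tendsto_log_atTop) (f := fun _ : ℝ => (1:ℝ))
      simpa using this
    have := hnum2.div hden2 one_ne_zero
    rw [div_one] at this
    exact this
  apply hGlim.congr'
  filter_upwards [J_im ha ha3, J_dom ha ha3, eventually_ge_atTop (1:ℝ),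
    (L_D ha).eventually (eventually_gt_nhds (by positivity : (0:ℝ) < 2 / (1 + a))),
    Real.tendsto_log_atTop.eventually_ge_atTop (|Real.log (1 / a)| + 2),
    (Metric.tendsto_nhds.1 hh) 1 one_pos] with t hJ1 hJ2 ht hD0 hL hdist
  rw [hJ1, hJ2]
  set E : ℝ := 1 - ‖FF a t‖ with hEdef
  set D : ℝ := ‖FF a t - GG a‖ with hDdef
  set L : ℝ := Real.log t with hLdef
  set g : ℝ := Real.log ((E + D) / (t ^ 2 * E)) with hgdef
  set h : ℝ := Real.log (1 / t + 1 / a) with hhdef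
  have hE0 : 0 < E := by
    rw [hEdef]
    have := FF_norm_lt ha ht
    linarith
  have ht0 : (0:ℝ) < t := by linarith
  have hL2 : (2:ℝ) ≤ L := by
    have : (0:ℝ) ≤ |Real.log (1 / a)| := abs_nonneg _
    linarith
  have hL0 : L ≠ 0 := by linarith
  have hLh : (0:ℝ) < L + h := by
    rw [Real.dist_eq] at hdist
    have h1 : Real.log (1 / a) - 1 < h := by
      have := abs_lt.1 hdist
      linarith [this.1]
    have h2 : -(|Real.log (1 / a)|) ≤ Real.log (1 / a) := neg_abs_le _
    linarith
  -- decompose the two logs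
  have hlog1 : Real.log (1 + D / E) = 2 * L + g := by
    have he1 : 1 + D / E = t ^ 2 * ((E + D) / (t ^ 2 * E)) := by
      field_simp
    rw [he1, Real.log_mul (by positivity) ?hne, hgdef]
    · rw [show (t:ℝ) ^ 2 = t ^ (2:ℕ) from rfl, Real.log_pow]
      push_cast
      ring
    case hne =>
      have hED : 0 < E + D := by
        have : 0 ≤ D := norm_nonneg _
        linarith
      positivity
  have hlog2 : Real.log (1 + t / a) = L + h := by
    have he2 : 1 + t / a = t * (1 / t + 1 / a) := by
      field_simp
    rw [he2, Real.log_mul (ne_of_gt ht0) (by positivity), hhdef, hLdef]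
  rw [hlog1, hlog2]
  have hLhne : L + h ≠ 0 := ne_of_gt hLh
  field_simp

/-- For `f(z) = (z-i)/(z+i) : ℍ² \ {i} → 𝔻 \ {0}` the inequality
`j_{𝔻∖{0}}(f x, f y) ≤ 2 j_{ℍ²∖{i}}(x, y)` holds, and the constant `2` is
best possible: with `x = t + ai`, `y = ai`, `0 < a < 1/3`, the ratio tends
to `2` as `t → ∞`. -/
theorem cayley_punctured_jdist_sharp (f : ℂ → ℂ)
    (hf : ∀ z, f z = (z - Complex.I) / (z + Complex.I)) :
    (∀ x ∈ {z : ℂ | 0 < z.im} \ {Complex.I}, ∀ y ∈ {z : ℂ | 0 < z.im} \ {Complex.I},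
        jdist (Metric.ball (0 : ℂ) 1 \ {0}) (f x) (f y) ≤
          2 * jdist ({z : ℂ | 0 < z.im} \ {Complex.I}) x y) ∧
      ∀ a : ℝ, 0 < a → a < 1 / 3 →
        Tendsto (fun t : ℝ =>
            jdist (Metric.ball (0 : ℂ) 1 \ {0})
                (f ((t : ℂ) + (a : ℂ) * Complex.I)) (f ((a : ℂ) * Complex.I)) /
              jdist ({z : ℂ | 0 < z.im} \ {Complex.I})
                ((t : ℂ) + (a : ℂ) * Complex.I) ((a : ℂ) * Complex.I))
          atTop (𝓝 2) := by
  constructor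
  · exact part1 f hf
  · intro a ha ha3
    have hfun : (fun t : ℝ =>
        jdist (Metric.ball (0 : ℂ) 1 \ {0})
            (f ((t : ℂ) + (a : ℂ) * Complex.I)) (f ((a : ℂ) * Complex.I)) /
          jdist ({z : ℂ | 0 < z.im} \ {Complex.I})
            ((t : ℂ) + (a : ℂ) * Complex.I) ((a : ℂ) * Complex.I))
        = (fun t : ℝ => jdist (Metric.ball (0 : ℂ) 1 \ {0}) (FF a t) (GG a) /
            jdist ({z : ℂ | 0 < z.im} \ {Complex.I}) (XX a t) (YY a)) := by
      funext t
      rw [hf, hf]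
      rfl
    rw [hfun]
    exact part2 ha ha3
end

section
/- Let f : 𝔻 → ℍ² be the Möbius transformation f(z) = i(1 + z)/(1 − z) of the unit disk onto the upper half plane. Then for all x, y ∈ 𝔻: j_{ℍ²}(f(x), f(y)) ≤ 2 · j_𝔻(x, y). Moreover the constant 2 is best possible: for x = t and y = −t with t ∈ (0,1), equality j_{ℍ²}(f(x), f(y)) = 2 · j_𝔻(x, y) holds. -/
open Metric Filter Topology Set

section Aux

noncomputable def Complex.abs : AbsoluteValue ℂ ℝ :=
  IsAbsoluteValue.toAbsoluteValue (norm : ℂ → ℝ)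

lemma Complex.norm_eq_abs (z : ℂ) : ‖z‖ = Complex.abs z := rfl

lemma Complex.abs_ofReal (r : ℝ) : Complex.abs (r : ℂ) = |r| := Complex.norm_real r

lemma Complex.abs_two : Complex.abs 2 = 2 := Complex.norm_two

lemma Complex.abs_I : Complex.abs Complex.I = 1 := Complex.norm_I

lemma Complex.sq_abs (z : ℂ) : Complex.abs z ^ 2 = Complex.normSq z := Complex.sq_norm z

lemma Complex.abs_im_le_abs (z : ℂ) : |z.im| ≤ Complex.abs z := Complex.abs_im_le_norm z

lemma le_infDist' {s : Set ℂ} (hs : s.Nonempty) {x : ℂ} {b : ℝ}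
    (h : ∀ y ∈ s, b ≤ dist x y) : b ≤ Metric.infDist x s := by
  by_contra hlt
  push_neg at hlt
  obtain ⟨y, hy, hxy⟩ := (Metric.infDist_lt_iff hs).1 hlt
  exact absurd (h y hy) (not_le.2 hxy)

lemma infDist_halfplane (z : ℂ) :
    Metric.infDist z (frontier {w : ℂ | 0 < w.im}) = |z.im| := by
  rw [Complex.frontier_setOf_lt_im]
  apply le_antisymm
  · have hm : ((z.re : ℂ)) ∈ {w : ℂ | w.im = 0} := by simp
    refine (Metric.infDist_le_dist_of_mem (x := z) hm).trans_eq ?_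
    rw [Complex.dist_eq]
    have : z - (z.re : ℂ) = z.im * Complex.I := by
      apply Complex.ext <;> simp
    rw [this]
    simp
  · refine le_infDist' ⟨(0:ℂ), by simp⟩ fun w hw => ?_
    rw [Complex.dist_eq]
    calc |z.im| = |(z - w).im| := by simp [Complex.sub_im, hw.out]
    _ ≤ Complex.abs (z - w) := Complex.abs_im_le_abs _

lemma infDist_disk (z : ℂ) (hz : Complex.abs z < 1) :
    Metric.infDist z (frontier (Metric.ball (0:ℂ) 1)) = 1 - Complex.abs z := by
  rw [frontier_ball (0:ℂ) one_ne_zero]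
  apply le_antisymm
  · by_cases h0 : z = 0
    · subst h0
      have hm : (1:ℂ) ∈ sphere (0:ℂ) 1 := by simp
      simpa using Metric.infDist_le_dist_of_mem (x := (0:ℂ)) hm
    · have habs : Complex.abs z ≠ 0 := Complex.abs.ne_zero h0
      have hm : z / (Complex.abs z : ℂ) ∈ sphere (0:ℂ) 1 := by
        simp [Complex.dist_eq, map_div₀, div_self habs, Complex.norm_eq_abs,
          abs_of_nonneg (Complex.abs.nonneg z)]
      refine (Metric.infDist_le_dist_of_mem (x := z) hm).trans_eq ?_
      rw [Complex.dist_eq]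
      have ha : (Complex.abs z : ℂ) ≠ 0 := by simpa using habs
      have : z - z / (Complex.abs z : ℂ) = z * ((Complex.abs z : ℂ) - 1) / (Complex.abs z : ℂ) := by
        field_simp
      rw [this, Complex.norm_eq_abs, map_div₀, map_mul]
      have h1 : Complex.abs ((Complex.abs z : ℂ) - 1) = 1 - Complex.abs z := by
        rw [← Complex.ofReal_one, ← Complex.ofReal_sub, Complex.abs_ofReal,
          abs_of_nonpos (by linarith)]
        ring
      rw [h1]
      simp only [Complex.abs_ofReal, _root_.abs_of_nonneg (Complex.abs.nonneg z)]
      field_simp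
  · refine le_infDist' ⟨(1:ℂ), by simp⟩ fun w hw => ?_
    rw [mem_sphere_iff_norm, sub_zero] at hw
    rw [Complex.dist_eq, ← Complex.norm_eq_abs]
    calc 1 - Complex.abs z = ‖w‖ - ‖z‖ := by rw [hw, Complex.norm_eq_abs]
    _ ≤ ‖w - z‖ := norm_sub_norm_le w z
    _ = ‖z - w‖ := norm_sub_rev w z

lemma im_moebius (z : ℂ) (hz : (1:ℂ) - z ≠ 0) :
    (Complex.I * (1 + z) / (1 - z)).im
      = (1 - Complex.abs z ^ 2) / Complex.abs (1 - z) ^ 2 := by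
  rw [Complex.div_im, Complex.sq_abs, Complex.sq_abs]
  have hsq : Complex.normSq (1 - z) ≠ 0 := by simpa using hz
  field_simp [Complex.normSq_apply, Complex.mul_im, Complex.mul_re,
    Complex.add_im, Complex.add_re, Complex.sub_im, Complex.sub_re]
  simp only [Complex.normSq_apply, Complex.mul_im, Complex.mul_re, Complex.I_re, Complex.I_im,
    Complex.add_im, Complex.add_re, Complex.sub_im, Complex.sub_re, Complex.one_re, Complex.one_im]
  ring

lemma diff_moebius (x y : ℂ) (hx : (1:ℂ) - x ≠ 0) (hy : (1:ℂ) - y ≠ 0) :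
    Complex.I * (1 + x) / (1 - x) - Complex.I * (1 + y) / (1 - y)
      = 2 * Complex.I * (x - y) / ((1 - x) * (1 - y)) := by
  field_simp
  ring

-- (★): 2 r m² ≤ (2m + c) (1-a²) s,  m = min (1-a) (1-b)
lemma star (a b r s c : ℝ) (ha0 : 0 ≤ a) (ha1 : a < 1) (hb0 : 0 ≤ b) (hb1 : b < 1)
    (hr1 : 1 - a ≤ r) (hr2 : r ≤ 1 + a) (hs1 : 1 - b ≤ s)
    (hc0 : 0 ≤ c) (hrsc : r ≤ s + c) :
    2 * r * (min (1 - a) (1 - b))^2 ≤ (2 * min (1 - a) (1 - b) + c) * (1 - a^2) * s := by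
  obtain ⟨m, hm⟩ : ∃ m, m = min (1 - a) (1 - b) := ⟨_, rfl⟩
  rw [← hm]
  have hma : m ≤ 1 - a := hm ▸ min_le_left _ _
  have hmb : m ≤ 1 - b := hm ▸ min_le_right _ _
  have hm0 : 0 < m := hm ▸ lt_min (by linarith) (by linarith)
  have hP : (0:ℝ) < 1 - a^2 := by nlinarith
  have hs0 : 0 < s := by linarith
  have hmP : m ≤ 1 - a^2 := by nlinarith
  rcases le_or_gt r s with h | h
  · have h2 : r * m ≤ s * (1 - a^2) := mul_le_mul h hmP hm0.le hs0.le
    nlinarith [mul_nonneg (mul_nonneg hc0 hP.le) hs0.le,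
      mul_le_mul_of_nonneg_left h2 (by positivity : (0:ℝ) ≤ 2*m)]
  · have hsm : m ≤ s := by
      rcases min_cases (1 - a) (1 - b) with ⟨he, hab⟩ | ⟨he, hab⟩ <;>
        rw [← hm] at he <;> linarith
    have hrm : m < r := lt_of_le_of_lt hsm h
    have hgm : 0 ≤ (2*m + r - m) * (1 - a^2) * m - 2*r*m^2 := by
      rcases min_cases (1 - a) (1 - b) with ⟨he, hab⟩ | ⟨he, hab⟩ <;> rw [← hm] at he
      · have : (2*m + r - m) * (1 - a^2) * m - 2*r*m^2 = m * m * (1-a) * (1 + a - r) := by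
          rw [he]; ring
        rw [this]
        have h4 : 0 ≤ 1 + a - r := by linarith
        have h5 : 0 ≤ 1 - a := by linarith
        positivity
      · have hba : a ≤ b := by linarith
        have hr0 : 0 < r := by linarith
        have key : 2*r*m ≤ (m + r)*(1-a^2) := by
          rcases le_or_gt (1 - 2*b + a^2) 0 with hcase | hcase
          · nlinarith [mul_nonpos_of_nonneg_of_nonpos hr0.le hcase,
              mul_nonneg hm0.le hP.le]
          · nlinarith [mul_nonneg (sub_nonneg.2 hba) (by linarith : (0:ℝ) ≤ 1 + a),
              mul_nonneg (by linarith : (0:ℝ) ≤ 1 + a - r) hcase.le]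
        nlinarith [mul_le_mul_of_nonneg_right key hm0.le]
    have hgr : 0 ≤ (2*m + r - r) * (1 - a^2) * r - 2*r*m^2 := by
      have heq : (2*m + r - r) * (1 - a^2) * r - 2*r*m^2 = 2*r*m*((1-a^2) - m) := by ring
      rw [heq]
      have hnn : 0 ≤ (1-a^2) - m := by linarith
      have hr0 : (0:ℝ) ≤ r := by linarith
      nlinarith [mul_nonneg (mul_nonneg hr0 hm0.le) hnn]
    have hid : ((2*m + r - s) * (1 - a^2) * s - 2*r*m^2) * (r - m)
        = ((2*m + r - m) * (1 - a^2) * m - 2*r*m^2) * (r - s)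
          + ((2*m + r - r) * (1 - a^2) * r - 2*r*m^2) * (s - m)
          + (1 - a^2) * (r - s) * (s - m) * (r - m) := by ring
    have hgs : 0 ≤ (2*m + r - s) * (1 - a^2) * s - 2*r*m^2 := by
      have h1 : 0 ≤ ((2*m + r - s) * (1 - a^2) * s - 2*r*m^2) * (r - m) := by
        rw [hid]
        have := mul_nonneg (mul_nonneg (mul_nonneg hP.le (sub_nonneg.2 h.le))
          (sub_nonneg.2 hsm)) (sub_nonneg.2 hrm.le)
        linarith [mul_nonneg hgm (sub_nonneg.2 h.le), mul_nonneg hgr (sub_nonneg.2 hsm)]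
      by_contra hneg
      push_neg at hneg
      have := mul_neg_of_neg_of_pos hneg (sub_pos.2 hrm)
      linarith
    nlinarith [mul_nonneg (mul_nonneg (sub_nonneg.2 (by linarith : r - s ≤ c)) hP.le) hs0.le]

lemma combine (a b rx ry c : ℝ) (ha0 : 0 ≤ a) (ha1 : a < 1) (hb0 : 0 ≤ b) (hb1 : b < 1)
    (hrx1 : 1 - a ≤ rx) (hrx2 : rx ≤ 1 + a) (hry1 : 1 - b ≤ ry) (hry2 : ry ≤ 1 + b)
    (hc0 : 0 ≤ c) (h1 : rx ≤ ry + c) (h2 : ry ≤ rx + c) :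
    1 + (2*c/(rx*ry)) / min ((1-a^2)/rx^2) ((1-b^2)/ry^2)
      ≤ (1 + c / min (1-a) (1-b))^2 := by
  have hrx0 : 0 < rx := by linarith
  have hry0 : 0 < ry := by linarith
  have hPa : (0:ℝ) < 1 - a^2 := by nlinarith
  have hPb : (0:ℝ) < 1 - b^2 := by nlinarith
  have hm0 : 0 < min (1-a) (1-b) := lt_min (by linarith) (by linarith)
  set m := min (1-a) (1-b) with hmdef
  have hsq : (1 + c / m)^2 = 1 + (2*m + c)*c/m^2 := by
    field_simp
    ring
  rw [hsq]
  have main : ∀ P R S : ℝ, 0 < P → 0 < R → 0 < S →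
      2 * R * m^2 ≤ (2*m + c) * P * S →
      (2*c/(R*S)) / (P/R^2) ≤ (2*m + c)*c/m^2 := by
    intro P R S hP hR hS hstar
    have hrw : (2*c/(R*S)) / (P/R^2) = 2*c*R/(P*S) := by
      field_simp
    rw [hrw, div_le_div_iff₀ (by positivity) (by positivity)]
    calc 2*c*R*m^2 = c * (2*R*m^2) := by ring
    _ ≤ c * ((2*m + c) * P * S) := mul_le_mul_of_nonneg_left hstar hc0
    _ = (2*m + c)*c*(P*S) := by ring
  rcases min_cases ((1-a^2)/rx^2) ((1-b^2)/ry^2) with ⟨he, _⟩ | ⟨he, _⟩ <;> rw [he]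
  · have hstar := star a b rx ry c ha0 ha1 hb0 hb1 hrx1 hrx2 hry1 hc0 h1
    have := main (1-a^2) rx ry hPa hrx0 hry0 (by rw [hmdef]; exact hstar)
    linarith
  · have hstar := star b a ry rx c hb0 hb1 ha0 ha1 hry1 hry2 hrx1 hc0 h2
    rw [min_comm] at hstar
    have := main (1-b^2) ry rx hPb hry0 hrx0 (by rw [hmdef]; exact hstar)
    have hrw : (2*c/(rx*ry)) = (2*c/(ry*rx)) := by rw [mul_comm rx ry]
    rw [hrw]
    linarith

lemma inner_eq (t : ℝ) (ht0 : 0 < t) (ht1 : t < 1) :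
    1 + (2*(2*t)/((1-t)*(1+t))) / ((1 - t^2)/(1+t)^2) = (1 + 2*t/(1-t))^2 := by
  have hne1 : (1-t) ≠ 0 := (by linarith : (0:ℝ) < 1-t).ne'
  have hne2 : (1+t) ≠ 0 := (by linarith : (0:ℝ) < 1+t).ne'
  have hne3 : (1-t^2) ≠ 0 := by nlinarith
  field_simp
  ring

end Aux

/-- The Möbius transformation `f(z) = i(1+z)/(1-z)` of the unit disk onto the
upper half plane satisfies `j_{ℍ²}(f x, f y) ≤ 2 j_𝔻(x, y)`, and the constant
`2` is best possible: for `x = t`, `y = -t`, `t ∈ (0,1)`, equality holds. -/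
theorem inverse_cayley_jdist_sharp (f : ℂ → ℂ)
    (hf : ∀ z, f z = Complex.I * (1 + z) / (1 - z)) :
    (∀ x ∈ Metric.ball (0 : ℂ) 1, ∀ y ∈ Metric.ball (0 : ℂ) 1,
        jdist {z : ℂ | 0 < z.im} (f x) (f y) ≤ 2 * jdist (Metric.ball (0 : ℂ) 1) x y) ∧
      ∀ t : ℝ, 0 < t → t < 1 →
        jdist {z : ℂ | 0 < z.im} (f (t : ℂ)) (f (-(t : ℂ))) =
          2 * jdist (Metric.ball (0 : ℂ) 1) (t : ℂ) (-(t : ℂ)) := by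
  constructor
  · intro x hx y hy
    have ha : Complex.abs x < 1 := by
      simpa [Complex.norm_eq_abs] using mem_ball_zero_iff.1 hx
    have hb : Complex.abs y < 1 := by
      simpa [Complex.norm_eq_abs] using mem_ball_zero_iff.1 hy
    have hx1 : (1:ℂ) - x ≠ 0 := by
      intro h
      rw [sub_eq_zero] at h
      rw [← h] at ha
      simp at ha
    have hy1 : (1:ℂ) - y ≠ 0 := by
      intro h
      rw [sub_eq_zero] at h
      rw [← h] at hb
      simp at hb
    set a := Complex.abs x with hadef
    set b := Complex.abs y with hbdef
    set rx := Complex.abs (1 - x) with hrxdef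
    set ry := Complex.abs (1 - y) with hrydef
    set c := Complex.abs (x - y) with hcdef
    have hrx1 : 1 - a ≤ rx := by
      have := norm_sub_norm_le (1:ℂ) x
      simpa [Complex.norm_eq_abs] using this
    have hrx2 : rx ≤ 1 + a := by
      have := norm_sub_le (1:ℂ) x
      simpa [Complex.norm_eq_abs] using this
    have hry1 : 1 - b ≤ ry := by
      have := norm_sub_norm_le (1:ℂ) y
      simpa [Complex.norm_eq_abs] using this
    have hry2 : ry ≤ 1 + b := by
      have := norm_sub_le (1:ℂ) y
      simpa [Complex.norm_eq_abs] using this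
    have htri1 : rx ≤ ry + c := by
      have h : (1:ℂ) - x = (1 - y) + (y - x) := by ring
      calc rx = Complex.abs ((1 - y) + (y - x)) := by rw [hrxdef, h]
      _ ≤ Complex.abs (1 - y) + Complex.abs (y - x) := Complex.abs.add_le _ _
      _ = ry + c := by rw [Complex.abs.map_sub y x]
    have htri2 : ry ≤ rx + c := by
      have h : (1:ℂ) - y = (1 - x) + (x - y) := by ring
      calc ry = Complex.abs ((1 - x) + (x - y)) := by rw [hrydef, h]
      _ ≤ Complex.abs (1 - x) + Complex.abs (x - y) := Complex.abs.add_le _ _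
      _ = rx + c := rfl
    have ha0 : 0 ≤ a := Complex.abs.nonneg x
    have hb0 : 0 ≤ b := Complex.abs.nonneg y
    have hc0 : 0 ≤ c := Complex.abs.nonneg _
    have hrx0 : 0 < rx := by linarith
    have hry0 : 0 < ry := by linarith
    -- compute the left-hand side
    have hImx : Metric.infDist (f x) (frontier {z : ℂ | 0 < z.im}) = (1 - a^2)/rx^2 := by
      rw [infDist_halfplane, hf x, im_moebius x hx1, _root_.abs_of_nonneg]
      exact div_nonneg (by nlinarith) (by positivity)
    have hImy : Metric.infDist (f y) (frontier {z : ℂ | 0 < z.im}) = (1 - b^2)/ry^2 := by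
      rw [infDist_halfplane, hf y, im_moebius y hy1, _root_.abs_of_nonneg]
      exact div_nonneg (by nlinarith) (by positivity)
    have hdist : dist (f x) (f y) = 2*c/(rx*ry) := by
      rw [Complex.dist_eq, Complex.norm_eq_abs, hf x, hf y, diff_moebius x y hx1 hy1, map_div₀, map_mul,
        map_mul, Complex.abs_two, Complex.abs_I, map_mul, mul_one]
    have hL : jdist {z : ℂ | 0 < z.im} (f x) (f y)
        = Real.log (1 + (2*c/(rx*ry)) / min ((1-a^2)/rx^2) ((1-b^2)/ry^2)) := by
      rw [jdist, hImx, hImy, hdist]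
    have hR : jdist (Metric.ball (0:ℂ) 1) x y
        = Real.log (1 + c / min (1-a) (1-b)) := by
      rw [jdist, infDist_disk x ha, infDist_disk y hb, Complex.dist_eq, Complex.norm_eq_abs]
    rw [hL, hR]
    have hkey := combine a b rx ry c ha0 ha hb0 hb hrx1 hrx2 hry1 hry2 hc0 htri1 htri2
    have h2log : 2 * Real.log (1 + c / min (1-a) (1-b))
        = Real.log ((1 + c / min (1-a) (1-b))^2) := by
      rw [Real.log_pow]
      norm_num
    rw [h2log]
    apply Real.log_le_log _ hkey
    have hPa : (0:ℝ) < 1 - a^2 := by nlinarith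
    have hPb : (0:ℝ) < 1 - b^2 := by nlinarith
    have hmin0 : 0 < min ((1-a^2)/rx^2) ((1-b^2)/ry^2) :=
      lt_min (by positivity) (by positivity)
    have hnum : 0 ≤ 2*c/(rx*ry) := by positivity
    have := div_nonneg hnum hmin0.le
    linarith
  · intro t ht0 ht1
    have h1t : (0:ℝ) < 1 - t := by linarith
    have h1t' : (0:ℝ) < 1 + t := by linarith
    have hx1 : (1:ℂ) - (t:ℂ) ≠ 0 := by
      intro h
      rw [sub_eq_zero] at h
      have : (1:ℝ) = t := by exact_mod_cast h
      linarith
    have hy1 : (1:ℂ) - (-(t:ℂ)) ≠ 0 := by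
      intro h
      rw [sub_eq_zero] at h
      have : (1:ℝ) = -t := by exact_mod_cast h
      linarith
    have habs_t : Complex.abs (t:ℂ) = t := by
      rw [Complex.abs_ofReal, _root_.abs_of_pos ht0]
    have habs_nt : Complex.abs (-(t:ℂ)) = t := by
      rw [map_neg_eq_map, habs_t]
    have habs1t : Complex.abs (1 - (t:ℂ)) = 1 - t := by
      rw [← Complex.ofReal_one, ← Complex.ofReal_sub, Complex.abs_ofReal,
        _root_.abs_of_pos h1t]
    have habs1nt : Complex.abs (1 - (-(t:ℂ))) = 1 + t := by
      have : (1:ℂ) - (-(t:ℂ)) = ((1 + t : ℝ) : ℂ) := by push_cast; ring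
      rw [this, Complex.abs_ofReal, _root_.abs_of_pos h1t']
    -- LHS pieces
    have hImx : Metric.infDist (f (t:ℂ)) (frontier {z : ℂ | 0 < z.im})
        = (1 - t^2)/(1-t)^2 := by
      rw [infDist_halfplane, hf (t:ℂ), im_moebius _ hx1, habs_t, habs1t,
        _root_.abs_of_nonneg (div_nonneg (by nlinarith) (by positivity))]
    have hImy : Metric.infDist (f (-(t:ℂ))) (frontier {z : ℂ | 0 < z.im})
        = (1 - t^2)/(1+t)^2 := by
      rw [infDist_halfplane, hf (-(t:ℂ)), im_moebius _ hy1, habs_nt, habs1nt,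
        _root_.abs_of_nonneg (div_nonneg (by nlinarith) (by positivity))]
    have hdist : dist (f (t:ℂ)) (f (-(t:ℂ))) = 2*(2*t)/((1-t)*(1+t)) := by
      rw [Complex.dist_eq, Complex.norm_eq_abs, hf (t:ℂ), hf (-(t:ℂ)), diff_moebius _ _ hx1 hy1, map_div₀,
        map_mul, map_mul, Complex.abs_two, Complex.abs_I, map_mul, mul_one,
        habs1t, habs1nt]
      congr 1
      congr 1
      have : (t:ℂ) - (-(t:ℂ)) = ((2*t : ℝ) : ℂ) := by push_cast; ring
      rw [this, Complex.abs_ofReal, _root_.abs_of_pos (by linarith)]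
    have hmin : min ((1 - t^2)/(1-t)^2) ((1 - t^2)/(1+t)^2) = (1 - t^2)/(1+t)^2 := by
      apply min_eq_right
      rw [div_le_div_iff₀ (by positivity) (by positivity)]
      nlinarith
    have hL : jdist {z : ℂ | 0 < z.im} (f (t:ℂ)) (f (-(t:ℂ)))
        = Real.log (1 + (2*(2*t)/((1-t)*(1+t))) / ((1 - t^2)/(1+t)^2)) := by
      rw [jdist, hImx, hImy, hdist, hmin]
    have hR : jdist (Metric.ball (0:ℂ) 1) (t:ℂ) (-(t:ℂ))
        = Real.log (1 + 2*t/(1-t)) := by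
      rw [jdist, infDist_disk _ (by rw [habs_t]; exact ht1),
        infDist_disk _ (by rw [habs_nt]; exact ht1), habs_t, habs_nt, min_self,
        Complex.dist_eq, Complex.norm_eq_abs]
      congr 2
      have : (t:ℂ) - (-(t:ℂ)) = ((2*t : ℝ) : ℂ) := by push_cast; ring
      rw [this, Complex.abs_ofReal, _root_.abs_of_pos (by linarith)]
    rw [hL, hR]
    have hinner := inner_eq t ht0 ht1
    rw [hinner, Real.log_pow]
    norm_num
end
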